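/- For an integer n ≥ 2 define μ_n^−(ρ) = −1 − (n·ρ^{(n−1)²}·(1 − (1 − 1/n)·ρ^{2n−1}))/(2n−1) for ρ ≥ 1, and set ρ_n = (1 + 1/(n−1))^{1/(2n−1)}. Then μ_n^− has a unique zero ν_n* in the interval [1, +∞); moreover for every ρ ≥ 1, μ_n^−(ρ) < 0 if and only if ρ < ν_n*, μ_n^−(ρ) > 0 if and only if ρ > ν_n*, μ_n^−(ν_n*) = 0, and ν_n* > ρ_n. -/

import Mathlib

/-- The function `μ_n^−` from the analysis of the optimal third order SSP
Runge–Kutta methods with `n²` stages. -/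
noncomputable def munMinus (n : ℕ) (ρ : ℝ) : ℝ :=
  -1 - (n * ρ ^ ((n - 1) ^ 2) * (1 - (1 - 1 / (n : ℝ)) * ρ ^ (2 * n - 1))) / (2 * (n : ℝ) - 1)

lemma munMinus_eq (n : ℕ) (hn : 2 ≤ n) (ρ : ℝ) :
    munMinus n ρ = ((n : ℝ) - 1) / (2 * (n : ℝ) - 1) * ρ ^ (n ^ 2)
      - (n : ℝ) / (2 * (n : ℝ) - 1) * ρ ^ ((n - 1) ^ 2) - 1 := by
  obtain ⟨k, rfl⟩ : ∃ k, n = k + 2 := ⟨n - 2, by omega⟩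
  have h1 : k + 2 - 1 = k + 1 := by omega
  have h2 : 2 * (k + 2) - 1 = 2 * k + 3 := by omega
  have h3 : (k + 2) ^ 2 = (k+1)^2 + (2*k+3) := by ring
  have hN : ((k:ℝ) + 2) ≠ 0 := by positivity
  have hD : 2 * ((k:ℝ) + 2) - 1 ≠ 0 := by nlinarith [Nat.cast_nonneg (α := ℝ) k]
  rw [munMinus, h1, h2, h3, pow_add]
  push_cast
  field_simp
  ring

lemma munMinus_strictMonoOn (n : ℕ) (hn : 2 ≤ n) :
    StrictMonoOn (munMinus n) (Set.Ici 1) := by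
  have hN : (2:ℝ) ≤ (n:ℝ) := by exact_mod_cast hn
  have hd : (0:ℝ) < 2 * (n:ℝ) - 1 := by linarith
  set B : ℝ := ((n : ℝ) - 1) / (2 * (n : ℝ) - 1) with hB
  set A : ℝ := (n : ℝ) / (2 * (n : ℝ) - 1) with hA
  set m : ℕ := n ^ 2 with hm
  set a : ℕ := (n - 1) ^ 2 with ha
  have key : StrictMonoOn (fun ρ : ℝ => B * ρ ^ m - A * ρ ^ a - 1) (Set.Ici 1) := by
    have hderiv : ∀ ρ : ℝ, HasDerivAt (fun ρ : ℝ => B * ρ ^ m - A * ρ ^ a - 1)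
        (B * ((m:ℝ) * ρ ^ (m - 1)) - A * ((a:ℝ) * ρ ^ (a - 1))) ρ := fun ρ =>
      (((hasDerivAt_pow m ρ).const_mul B).sub ((hasDerivAt_pow a ρ).const_mul A)).sub_const 1
    apply strictMonoOn_of_deriv_pos (convex_Ici 1)
    · exact fun ρ _ => ((hderiv ρ).continuousAt).continuousWithinAt
    · intro ρ hρ
      rw [interior_Ici] at hρ
      rw [(hderiv ρ).deriv]
      have hρ1 : (1:ℝ) < ρ := hρ
      have hρ0 : (0:ℝ) < ρ := by linarith
      have hle : ρ ^ (a - 1) ≤ ρ ^ (m - 1) := by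
        apply pow_le_pow_right₀ (by linarith)
        have : a ≤ m := by
          rw [ha, hm]; exact Nat.pow_le_pow_left (by omega) 2
        omega
      have hpos : (0:ℝ) < ρ ^ (a - 1) := by positivity
      have hmcast : (m : ℝ) = (n:ℝ) ^ 2 := by rw [hm]; push_cast; ring
      have hacast : (a : ℝ) = ((n:ℝ) - 1) ^ 2 := by
        rw [ha]
        push_cast [Nat.cast_sub (by omega : 1 ≤ n)]
        ring
      have hBm : A * (a:ℝ) < B * (m:ℝ) := by
        rw [hA, hB, hmcast, hacast, div_mul_eq_mul_div, div_mul_eq_mul_div,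
          div_lt_div_iff₀ hd hd]
        nlinarith
      have hAa : 0 ≤ A * (a:ℝ) := by
        apply mul_nonneg
        · rw [hA]; positivity
        · positivity
      calc (0:ℝ) < (B * m - A * a) * ρ ^ (a-1) := by
            apply mul_pos (by linarith) hpos
        _ ≤ B * ((m:ℝ) * ρ ^ (m - 1)) - A * ((a:ℝ) * ρ ^ (a - 1)) := by
            have h1 : B * (m:ℝ) * ρ ^ (a-1) ≤ B * (m:ℝ) * ρ ^ (m-1) := by
              apply mul_le_mul_of_nonneg_left hle
              nlinarith
            nlinarith
  intro x hx y hy hxy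
  rw [munMinus_eq n hn, munMinus_eq n hn]
  exact key hx hy hxy

/-- **Lemma 3.11.** For `n ≥ 2`, `μ_n^−` has a unique zero `ν_n*` in `[1, ∞)`,
`μ_n^−(ρ) < 0 ⇔ ρ < ν_n*`, `μ_n^−(ρ) > 0 ⇔ ρ > ν_n*` for `ρ ≥ 1`, and
`ν_n* > ρ_n = (1 + 1/(n−1))^{1/(2n−1)}`. -/
theorem munMinus_unique_root (n : ℕ) (hn : 2 ≤ n) :
    ∃ ν : ℝ, 1 ≤ ν ∧ munMinus n ν = 0 ∧
      (∀ ρ : ℝ, 1 ≤ ρ → munMinus n ρ = 0 → ρ = ν) ∧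
      (∀ ρ : ℝ, 1 ≤ ρ → (munMinus n ρ < 0 ↔ ρ < ν)) ∧
      (∀ ρ : ℝ, 1 ≤ ρ → (0 < munMinus n ρ ↔ ν < ρ)) ∧
      (1 + 1 / ((n : ℝ) - 1)) ^ ((1 : ℝ) / (2 * (n : ℝ) - 1)) < ν := by
  have hN : (2:ℝ) ≤ (n:ℝ) := by exact_mod_cast hn
  have hd : (0:ℝ) < 2 * (n:ℝ) - 1 := by linarith
  set B : ℝ := ((n : ℝ) - 1) / (2 * (n : ℝ) - 1) with hB
  set A : ℝ := (n : ℝ) / (2 * (n : ℝ) - 1) with hA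
  have hB0 : 0 < B := by rw [hB]; apply div_pos (by linarith) hd
  have hA0 : 0 < A := by rw [hA]; positivity
  have hmono := munMinus_strictMonoOn n hn
  -- value at 1
  have hμ1 : munMinus n 1 < 0 := by
    have h1 : ((n:ℝ)-1)/(2*(n:ℝ)-1) - (n:ℝ)/(2*(n:ℝ)-1) = -1 / (2*(n:ℝ)-1) := by
      field_simp
      ring
    rw [munMinus_eq n hn, one_pow, one_pow]
    have h2 : 0 < 1 / (2*(n:ℝ)-1) := by positivity
    rw [mul_one, mul_one]
    rw [h1, neg_div]
    linarith [h2]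
  -- a large point where μ > 0
  set R : ℝ := max 1 ((A + 2)/B) with hR
  have hR1 : (1:ℝ) ≤ R := le_max_left _ _
  have hμR : 0 < munMinus n R := by
    have hsplit : n ^ 2 = (n-1)^2 + (2*n - 1) := by
      obtain ⟨k, rfl⟩ : ∃ k, n = k + 2 := ⟨n - 2, by omega⟩
      have h1 : k + 2 - 1 = k + 1 := by omega
      have h2 : 2 * (k + 2) - 1 = 2 * k + 3 := by omega
      rw [h1, h2]; ring
    have hRb : (A + 2) / B ≤ R ^ (2*n - 1) := by
      calc (A+2)/B ≤ R := le_max_right _ _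
        _ ≤ R ^ (2*n-1) := le_self_pow₀ (by linarith) (by omega)
    have hBRb : A + 2 ≤ B * R ^ (2*n-1) := by
      rw [div_le_iff₀ hB0] at hRb; linarith [hRb]
    have hRa : (1:ℝ) ≤ R ^ ((n-1)^2) := one_le_pow₀ hR1
    rw [munMinus_eq n hn, hsplit, pow_add]
    have hRb1 : (1:ℝ) ≤ R ^ (2*n-1) := one_le_pow₀ hR1
    have hA' : A * R ^ ((n-1)^2) ≤ A * (R ^ ((n-1)^2) * R^(2*n-1)) := by
      apply mul_le_mul_of_nonneg_left _ (le_of_lt hA0)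
      exact le_mul_of_one_le_right (by positivity) hRb1
    nlinarith [mul_le_mul_of_nonneg_left hBRb (le_trans zero_le_one hRa)]
  -- continuity
  have hcont : Continuous (munMinus n) := by
    have : munMinus n = fun ρ => B * ρ ^ (n^2) - A * ρ ^ ((n-1)^2) - 1 :=
      funext (munMinus_eq n hn)
    rw [this]; fun_prop
  -- IVT
  obtain ⟨ν, hνmem, hν0⟩ : ∃ ν ∈ Set.Icc (1:ℝ) R, munMinus n ν = 0 := by
    have := intermediate_value_Icc hR1 (hcont.continuousOn)
    have h0 : (0:ℝ) ∈ Set.Icc (munMinus n 1) (munMinus n R) :=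
      ⟨le_of_lt hμ1, le_of_lt hμR⟩
    obtain ⟨ν, hν, hν'⟩ := this h0
    exact ⟨ν, hν, hν'⟩
  have hν1 : (1:ℝ) ≤ ν := hνmem.1
  -- the two iffs
  have hlt : ∀ ρ : ℝ, 1 ≤ ρ → (munMinus n ρ < 0 ↔ ρ < ν) := by
    intro ρ hρ
    constructor
    · intro h
      by_contra hle
      push_neg at hle
      rcases eq_or_lt_of_le hle with rfl | hlt
      · exact absurd hν0 (ne_of_lt h)
      · have := hmono hν1 hρ hlt
        rw [hν0] at this; linarith
    · intro h
      have := hmono hρ hν1 h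
      rw [hν0] at this; exact this
  have hgt : ∀ ρ : ℝ, 1 ≤ ρ → (0 < munMinus n ρ ↔ ν < ρ) := by
    intro ρ hρ
    constructor
    · intro h
      by_contra hle
      push_neg at hle
      rcases eq_or_lt_of_le hle with rfl | hlt
      · exact absurd hν0 (ne_of_gt h)
      · have := hmono hρ hν1 hlt
        rw [hν0] at this; linarith
    · intro h
      have := hmono hν1 hρ h
      rw [hν0] at this; exact this
  -- ρ_n < ν
  have hn1 : (0:ℝ) < (n:ℝ) - 1 := by linarith
  set t : ℝ := 1 + 1 / ((n:ℝ) - 1) with ht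
  have ht1 : (1:ℝ) ≤ t := by
    have h : 0 < 1 / ((n:ℝ) - 1) := by positivity
    rw [ht]; linarith
  have ht0 : (0:ℝ) < t := by linarith
  set ρn : ℝ := t ^ ((1:ℝ) / (2 * (n:ℝ) - 1)) with hρn
  have hρn1 : (1:ℝ) ≤ ρn := Real.one_le_rpow ht1 (by positivity)
  have hpow : ρn ^ (2*n - 1) = t := by
    rw [hρn, ← Real.rpow_natCast (t ^ ((1:ℝ) / (2 * (n:ℝ) - 1))) (2*n-1),
      ← Real.rpow_mul (le_of_lt ht0)]
    have hc : ((2*n - 1 : ℕ) : ℝ) = 2 * (n:ℝ) - 1 := by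
      push_cast [Nat.cast_sub (by omega : 1 ≤ 2*n)]; ring
    rw [hc, one_div_mul_cancel (ne_of_gt hd), Real.rpow_one]
  have hzero : 1 - (1 - 1/(n:ℝ)) * ρn ^ (2*n-1) = 0 := by
    rw [hpow, ht]
    have hn0 : (n:ℝ) ≠ 0 := by positivity
    field_simp
    ring
  have hμρn : munMinus n ρn < 0 := by
    rw [munMinus, hzero, mul_zero, zero_div]
    norm_num
  refine ⟨ν, hν1, hν0, ?_, hlt, hgt, (hlt ρn hρn1).mp hμρn⟩
  intro ρ hρ hρ0
  by_contra hne
  rcases lt_or_gt_of_ne hne with h | h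
  · have := (hlt ρ hρ).mpr h; linarith [this, hρ0.le]
  · have := (hgt ρ hρ).mpr h; linarith
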